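/- Let (k,l,m) be an admissible triple with r := (l+m−k)/2 ≥ 1, and for N ≥ 3 set q = q(N) ∈ (0,1) with q + 1/q = N. Then lim_{N→∞} (N−2)(N−1)^{r−1} · [k+1]_q/θ_q(k,l,m) = 1. -/

import Mathlib

open Finset Filter


/-- The quantum integer [n]_q = (q^{-n} - q^n)/(q^{-1} - q), with [0]_q = 0. -/
noncomputable def qint (q : ℝ) (n : ℕ) : ℝ :=
  (q ^ (-(n : ℤ)) - q ^ (n : ℤ)) / (q⁻¹ - q)

/-- The quantum factorial [n]_q!. -/
noncomputable def qfact (q : ℝ) (n : ℕ) : ℝ :=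
  ∏ i ∈ Finset.range n, qint q (i + 1)

/-- The theta-net θ_q(k,l,m) where k = l + m - 2r. -/
noncomputable def qtheta (q : ℝ) (k l m r : ℕ) : ℝ :=
  (qfact q r * qfact q (l - r) * qfact q (m - r) * qfact q (k + r + 1)) /
    (qfact q l * qfact q m * qfact q k)

/-- The quantum parameter q(N) associated to O_N^+, satisfying q + 1/q = N. -/
noncomputable def qparam (N : ℕ) : ℝ :=
  (1 / (N : ℝ)) * (2 / (1 + Real.sqrt (1 - 4 / (N : ℝ) ^ 2)))


noncomputable def Pq (q : ℝ) (n : ℕ) : ℝ := ∑ j ∈ range n, q ^ (2*j)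
noncomputable def Pf (q : ℝ) (n : ℕ) : ℝ := ∏ i ∈ range n, Pq q (i+1)
def en (n : ℕ) : ℕ := ∑ i ∈ range n, i

lemma en_succ (n : ℕ) : en (n+1) = en n + n := Finset.sum_range_succ _ _
lemma en_one : en 1 = 0 := by simp [en]
lemma en_add (m n : ℕ) : en (m + n) = en m + en n + m * n := by
  induction n with
  | zero => simp [en]
  | succ n ih => rw [← Nat.add_assoc, en_succ, ih, en_succ]; ring

lemma qint_mul {q : ℝ} (hq : 0 < q) (h1 : q < 1) (n : ℕ) :
    q ^ n * qint q n = q * Pq q n := by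
  have hq0 : q ≠ 0 := ne_of_gt hq
  have hlt : q < q⁻¹ := lt_trans h1 (one_lt_inv₀ hq |>.2 h1)
  have hne : q⁻¹ - q ≠ 0 := sub_ne_zero.2 (ne_of_gt hlt)
  have hg : (∑ i ∈ range n, (q^2) ^ i) * ((q^2) - 1) = (q^2) ^ n - 1 := geom_sum_mul _ _
  have hP : Pq q n = ∑ i ∈ range n, (q^2) ^ i := by
    simp [Pq, pow_mul]
  rw [qint, hP]
  simp only [zpow_neg, zpow_natCast]
  have l1 : q ^ n * ((q ^ n)⁻¹ - q ^ n) = 1 - (q^2)^n := by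
    field_simp; ring
  have l2 : q * (q⁻¹ - q) = 1 - q^2 := by field_simp
  rw [mul_div_assoc', div_eq_iff hne, l1]
  linear_combination hg - (∑ i ∈ range n, (q^2) ^ i) * l2

lemma Pq_pos {q : ℝ} (hq : 0 < q) (n : ℕ) : 0 < Pq q (n+1) := by
  have : (0:ℝ) < q ^ (2*0) := by positivity
  exact Finset.sum_pos (fun j _ => by positivity) (by simp)

lemma Pf_pos {q : ℝ} (hq : 0 < q) (n : ℕ) : 0 < Pf q n :=
  Finset.prod_pos (fun i _ => Pq_pos hq i)

lemma qfact_eq {q : ℝ} (hq : 0 < q) (h1 : q < 1) (n : ℕ) :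
    q ^ en n * qfact q n = Pf q n := by
  have hq0 : q ≠ 0 := ne_of_gt hq
  induction n with
  | zero => simp [en, qfact, Pf]
  | succ n ih =>
    have : q * (q ^ en (n+1) * qfact q (n+1)) = q * Pf q (n+1) := by
      rw [en_succ, qfact, Finset.prod_range_succ, Pf, Finset.prod_range_succ]
      have := qint_mul hq h1 (n+1)
      calc q * (q ^ (en n + n) * ((∏ i ∈ range n, qint q (i+1)) * qint q (n+1)))
          = (q ^ en n * qfact q n) * (q ^ (n+1) * qint q (n+1)) := by
            rw [qfact]; ring
        _ = Pf q n * (q * Pq q (n+1)) := by rw [ih, qint_mul hq h1]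
        _ = q * ((∏ i ∈ range n, Pq q (i+1)) * Pq q (n+1)) := by rw [Pf]; ring
    exact mul_left_cancel₀ hq0 this

lemma qfact_formula {q : ℝ} (hq : 0 < q) (h1 : q < 1) (n : ℕ) :
    qfact q n = Pf q n / q ^ en n := by
  rw [eq_div_iff (pow_ne_zero _ (ne_of_gt hq)), mul_comm]
  exact qfact_eq hq h1 n

lemma qint_formula {q : ℝ} (hq : 0 < q) (h1 : q < 1) (n : ℕ) :
    qint q n = q * Pq q n / q ^ n := by
  rw [eq_div_iff (pow_ne_zero _ (ne_of_gt hq)), mul_comm (qint q n)]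
  exact qint_mul hq h1 n

lemma key_alg (a b s : ℕ) {q : ℝ} (hq : 0 < q) (h1 : q < 1) :
    (q + q⁻¹ - 2) * (q + q⁻¹ - 1)^((s+1)-1) *
      (qint q (a+b+1) / qtheta q (a+b) (a+(s+1)) (b+(s+1)) (s+1))
    = (1-q)^2 * (1-q+q^2)^s *
      ((Pf q (a+(s+1)) * Pf q (b+(s+1)) * Pf q (a+b+1)) /
        (Pf q (s+1) * Pf q a * Pf q b * Pf q (a+b+(s+1)+1))) := by
  have hq0 : q ≠ 0 := ne_of_gt hq
  have hsub1 : a + (s+1) - (s+1) = a := by omega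
  have hsub2 : b + (s+1) - (s+1) = b := by omega
  have hN2 : q + q⁻¹ - 2 = (1-q)^2 / q := by field_simp; ring
  have hN1 : q + q⁻¹ - 1 = (1-q+q^2) / q := by field_simp; ring
  have hPf := fun n => ne_of_gt (Pf_pos hq n : (0:ℝ) < Pf q n)
  rw [qtheta, hsub1, hsub2, hN2, hN1, qint_formula hq h1]
  rw [qfact_formula hq h1, qfact_formula hq h1, qfact_formula hq h1,
    qfact_formula hq h1, qfact_formula hq h1, qfact_formula hq h1,
    qfact_formula hq h1]
  simp only [Nat.add_sub_cancel]
  simp only [en_add, en_one, en_succ]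
  have hPfsucc : Pf q (a+b+1) = Pf q (a+b) * Pq q (a+b+1) := Finset.prod_range_succ _ _
  rw [hPfsucc]
  simp only [div_pow, ← mul_div_assoc, div_mul_eq_mul_div, div_div_eq_mul_div, div_div]
  have hPqpos : (0:ℝ) < Pq q (a+b+1) := Pq_pos hq _
  have h1' : ∀ n : ℕ, (0:ℝ) < q ^ n := fun n => pow_pos hq n
  have h2' : ∀ n : ℕ, (0:ℝ) < Pf q n := fun n => Pf_pos hq n
  rw [div_eq_div_iff ?h1 ?h2]
  · ring
  case h1 => exact ne_of_gt (by apply_rules [mul_pos, pow_pos, Pf_pos, Pq_pos, hq])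
  case h2 => exact ne_of_gt (by apply_rules [mul_pos, pow_pos, Pf_pos, Pq_pos, hq])

lemma qparam_eq {N : ℕ} (hN : 3 ≤ N) :
    qparam N = 2 / ((N:ℝ) * (1 + Real.sqrt (1 - 4 / (N:ℝ)^2))) := by
  have hx : (3:ℝ) ≤ (N:ℝ) := by exact_mod_cast hN
  have hx0 : (N:ℝ) ≠ 0 := by positivity
  have hs0 : 0 ≤ Real.sqrt (1 - 4 / (N:ℝ)^2) := Real.sqrt_nonneg _
  rw [qparam]
  field_simp

lemma sqrt_arg_nonneg {N : ℕ} (hN : 3 ≤ N) : 0 ≤ 1 - 4 / (N:ℝ)^2 := by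
  have hx : (3:ℝ) ≤ (N:ℝ) := by exact_mod_cast hN
  have : 4 / (N:ℝ)^2 ≤ 1 := by
    rw [div_le_one (by positivity)]; nlinarith
  linarith

lemma qparam_pos {N : ℕ} (hN : 3 ≤ N) : 0 < qparam N := by
  have hx : (3:ℝ) ≤ (N:ℝ) := by exact_mod_cast hN
  have hs0 : 0 ≤ Real.sqrt (1 - 4 / (N:ℝ)^2) := Real.sqrt_nonneg _
  rw [qparam_eq hN]
  positivity

lemma qparam_lt_one {N : ℕ} (hN : 3 ≤ N) : qparam N < 1 := by
  have hx : (3:ℝ) ≤ (N:ℝ) := by exact_mod_cast hN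
  have hs0 : 0 ≤ Real.sqrt (1 - 4 / (N:ℝ)^2) := Real.sqrt_nonneg _
  rw [qparam_eq hN, div_lt_one (by nlinarith)]
  nlinarith

lemma qparam_sum {N : ℕ} (hN : 3 ≤ N) : qparam N + (qparam N)⁻¹ = N := by
  have hx : (3:ℝ) ≤ (N:ℝ) := by exact_mod_cast hN
  have hs0 : 0 ≤ Real.sqrt (1 - 4 / (N:ℝ)^2) := Real.sqrt_nonneg _
  have hs2 : Real.sqrt (1 - 4 / (N:ℝ)^2) ^ 2 = 1 - 4 / (N:ℝ)^2 :=
    Real.sq_sqrt (sqrt_arg_nonneg hN)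
  have hx0 : (0:ℝ) < (N:ℝ) := by linarith
  rw [qparam_eq hN]
  set t := Real.sqrt (1 - 4 / (N:ℝ)^2) with ht
  have h1t : (0:ℝ) < (N:ℝ) * (1 + t) := by nlinarith
  have hts : t^2 = 1 - 4 / (N:ℝ)^2 := hs2
  have hN2 : (N:ℝ)^2 * t^2 = (N:ℝ)^2 - 4 := by
    rw [hts]; field_simp
  field_simp
  nlinarith [hN2]

lemma qparam_tendsto : Tendsto (fun N : ℕ => qparam N) atTop (nhds 0) := by
  apply tendsto_of_tendsto_of_tendsto_of_le_of_le' (g := fun _ : ℕ => (0:ℝ))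
    (h := fun N : ℕ => 2 / (N:ℝ)) tendsto_const_nhds
    (tendsto_const_div_atTop_nhds_zero_nat 2)
  · filter_upwards [eventually_ge_atTop 3] with N hN
    exact le_of_lt (qparam_pos hN)
  · filter_upwards [eventually_ge_atTop 3] with N hN
    have hx : (3:ℝ) ≤ (N:ℝ) := by exact_mod_cast hN
    have hs0 : 0 ≤ Real.sqrt (1 - 4 / (N:ℝ)^2) := Real.sqrt_nonneg _
    rw [qparam_eq hN, div_le_div_iff₀ (by nlinarith) (by linarith)]
    nlinarith

lemma Pq_zero (n : ℕ) : Pq 0 (n+1) = 1 := by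
  rw [Pq, Finset.sum_range_succ']
  simp

lemma Pf_zero (n : ℕ) : Pf 0 n = 1 := by
  rw [Pf]
  exact Finset.prod_eq_one (fun i _ => Pq_zero i)

noncomputable def Gfun (a b s : ℕ) (q : ℝ) : ℝ :=
  (1-q)^2 * (1-q+q^2)^s *
    ((Pf q (a+(s+1)) * Pf q (b+(s+1)) * Pf q (a+b+1)) /
      (Pf q (s+1) * Pf q a * Pf q b * Pf q (a+b+(s+1)+1)))

lemma Pq_continuous (n : ℕ) : Continuous (fun q : ℝ => Pq q n) :=
  continuous_finset_sum _ (fun j _ => continuous_pow _)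

lemma Pf_continuous (n : ℕ) : Continuous (fun q : ℝ => Pf q n) :=
  continuous_finset_prod _ (fun i _ => Pq_continuous _)

lemma Gfun_zero (a b s : ℕ) : Gfun a b s 0 = 1 := by
  simp [Gfun, Pf_zero]

lemma Gfun_contAt (a b s : ℕ) : ContinuousAt (Gfun a b s) 0 := by
  apply ContinuousAt.mul
  · exact (Continuous.mul (by continuity) (by continuity)).continuousAt
  · apply ContinuousAt.div
    · exact (Continuous.mul (Continuous.mul (Pf_continuous _) (Pf_continuous _)) (Pf_continuous _)).continuousAt
    · exact (((((Pf_continuous _).mul (Pf_continuous _)).mul (Pf_continuous _)).mul (Pf_continuous _))).continuousAt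
    · simp [Pf_zero]

theorem asymptotic_maximal_entanglement (k l m r : ℕ) (hr1 : 1 ≤ r)
    (hr : r ≤ min l m) (hk : k + 2 * r = l + m) :
    Filter.Tendsto
      (fun N : ℕ => ((N : ℝ) - 2) * ((N : ℝ) - 1) ^ (r - 1) *
        (qint (qparam N) (k + 1) / qtheta (qparam N) k l m r))
      Filter.atTop (nhds 1) := by
  obtain ⟨a, b, s, rfl, rfl, rfl, rfl⟩ :
      ∃ a b s, r = s+1 ∧ l = a+(s+1) ∧ m = b+(s+1) ∧ k = a+b :=
    ⟨l - r, m - r, r - 1, by omega, by omega, by omega, by omega⟩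
  have hG : Tendsto (fun N : ℕ => Gfun a b s (qparam N)) atTop (nhds 1) := by
    have := (Gfun_contAt a b s).tendsto.comp qparam_tendsto
    rwa [Gfun_zero] at this
  refine hG.congr' ?_
  filter_upwards [eventually_ge_atTop 3] with N hN
  have hq0 := qparam_pos hN
  have hq1 := qparam_lt_one hN
  have hsum := qparam_sum hN
  have := key_alg a b s hq0 hq1
  rw [← hsum]
  rw [Gfun]
  exact this.symm
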